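/- For A, B ∈ ℂ^{m×m}, if SG(A) ∩ SG†(B) = ∅, then the 2m × 2m block matrix [[I, B], [A, I]] is invertible. -/

import Mathlib

open Matrix Complex

/-- Euclidean norm of a complex vector. -/
noncomputable def enorm' {m : ℕ} (x : Fin m → ℂ) : ℝ :=
  Real.sqrt (∑ i, Complex.normSq (x i))

/-- Real inner product Re(x* y). -/
noncomputable def rinner {m : ℕ} (x y : Fin m → ℂ) : ℝ :=
  (∑ i, (starRingEnd ℂ) (x i) * y i).re

/-- The gain γ(x, y) = ‖y‖₂ / ‖x‖₂. -/
noncomputable def gain {m : ℕ} (x y : Fin m → ℂ) : ℝ := enorm' y / enorm' x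

/-- The phase θ(x, y) = arccos(Re(x* y)/(‖x‖₂‖y‖₂)) ∈ [0, π]. -/
noncomputable def phase {m : ℕ} (x y : Fin m → ℂ) : ℝ :=
  Real.arccos (rinner x y / (enorm' x * enorm' y))

/-- The point γ(x,y)·e^{iθ(x,y)}. -/
noncomputable def sgPoint {m : ℕ} (x y : Fin m → ℂ) : ℂ :=
  (gain x y : ℂ) * Complex.exp (Complex.I * (phase x y : ℂ))

/-- The scaled graph SG(A). -/
noncomputable def SG {m : ℕ} (A : Matrix (Fin m) (Fin m) ℂ) : Set ℂ :=
  {z | ∃ x : Fin m → ℂ, x ≠ 0 ∧ A.mulVec x ≠ 0 ∧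
      (z = sgPoint x (A.mulVec x) ∨ z = (starRingEnd ℂ) (sgPoint x (A.mulVec x)))}

/-- The inverse scaled graph SG†(B). -/
noncomputable def SGdag {m : ℕ} (B : Matrix (Fin m) (Fin m) ℂ) : Set ℂ :=
  {z | ∃ x : Fin m → ℂ, x ≠ 0 ∧ B.mulVec x ≠ 0 ∧
      (z = sgPoint (B.mulVec x) x ∨ z = (starRingEnd ℂ) (sgPoint (B.mulVec x) x))}

lemma enorm'_neg {m : ℕ} (x : Fin m → ℂ) : enorm' (-x) = enorm' x := by
  simp [enorm']

lemma rinner_neg_left {m : ℕ} (x y : Fin m → ℂ) : rinner (-x) y = - rinner x y := by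
  simp [rinner]

lemma rinner_neg_right {m : ℕ} (x y : Fin m → ℂ) : rinner x (-y) = - rinner x y := by
  simp [rinner]

lemma sgPoint_neg {m : ℕ} (x y : Fin m → ℂ) : sgPoint x (-y) = sgPoint (-x) y := by
  simp [sgPoint, gain, phase, enorm'_neg, rinner_neg_left, rinner_neg_right]

theorem block_matrix_invertible_of_sg_separation {m : ℕ} (A B : Matrix (Fin m) (Fin m) ℂ)
    (hsep : SG A ∩ SGdag B = ∅) :
    IsUnit (Matrix.fromBlocks (1 : Matrix (Fin m) (Fin m) ℂ) B A 1) := by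
  rw [Matrix.isUnit_iff_isUnit_det, isUnit_iff_ne_zero]
  intro hdet
  obtain ⟨v, hv, hMv⟩ := (Matrix.exists_mulVec_eq_zero_iff).2 hdet
  set x : Fin m → ℂ := v ∘ Sum.inl with hxdef
  set y : Fin m → ℂ := v ∘ Sum.inr with hydef
  rw [Matrix.fromBlocks_mulVec] at hMv
  have h1 : x + B.mulVec y = 0 := by
    funext i
    have := congrFun hMv (Sum.inl i)
    simpa [Matrix.one_mulVec, hxdef, hydef] using this
  have h2 : A.mulVec x + y = 0 := by
    funext i
    have := congrFun hMv (Sum.inr i)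
    simpa [Matrix.one_mulVec, hxdef, hydef] using this
  have hA : A.mulVec x = -y := by
    rw [← neg_eq_of_add_eq_zero_left h2]
  have hB : B.mulVec y = -x := by
    rw [← neg_eq_of_add_eq_zero_right h1]
  have hy : y ≠ 0 := by
    intro h
    apply hv
    have hx0 : x = 0 := by
      rw [h, Matrix.mulVec_zero, add_zero] at h1; exact h1
    funext i
    cases i with
    | inl i => exact congrFun hx0 i
    | inr i => exact congrFun h i
  have hx : x ≠ 0 := by
    intro h
    apply hy
    have := hA
    rw [h, Matrix.mulVec_zero] at this
    simpa using this.symm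
  have hmem : sgPoint x (A.mulVec x) ∈ SG A ∩ SGdag B := by
    constructor
    · exact ⟨x, hx, by rw [hA]; simpa using hy, Or.inl rfl⟩
    · refine ⟨y, hy, by rw [hB]; simpa using hx, Or.inl ?_⟩
      rw [hA, hB, sgPoint_neg]
  rw [hsep] at hmem
  exact hmem
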